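/- For every natural number n ≥ 1, every t > 0 and x > 0, the n-th derivative of x ↦ xⁿ/(x+t) equals n!·tⁿ/(x+t)^{n+1}. -/

import Mathlib

open Filter Topology Set Polynomial

/-- iterated derivative of `(y+t)⁻¹` away from the singularity. -/
lemma aux_inv_iteratedDeriv (t : ℝ) : ∀ (m : ℕ) (x : ℝ), x ≠ -t →
    iteratedDeriv m (fun y : ℝ => (y + t)⁻¹) x =
      (-1) ^ m * (m.factorial : ℝ) / (x + t) ^ (m + 1) := by
  intro m
  induction m with
  | zero => intro x hx; simp
  | succ m ih =>
    intro x hx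
    have hxt : x + t ≠ 0 := fun h => hx (by linarith)
    rw [iteratedDeriv_succ]
    have hmem : x ∈ ({-t}ᶜ : Set ℝ) := hx
    have hev : iteratedDeriv m (fun y : ℝ => (y + t)⁻¹) =ᶠ[𝓝 x]
        fun y => (-1) ^ m * (m.factorial : ℝ) / (y + t) ^ (m + 1) := by
      filter_upwards [isOpen_compl_singleton.mem_nhds hmem] with y hy
      exact ih y hy
    rw [hev.deriv_eq]
    have h1 : HasDerivAt (fun y : ℝ => (y + t) ^ (m + 1))
        (((m : ℝ) + 1) * (x + t) ^ m) x := by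
      have := ((hasDerivAt_id x).add_const t).pow (m + 1)
      simp at this; exact this
    have h2 : HasDerivAt (fun y : ℝ => ((y + t) ^ (m + 1))⁻¹)
        (-(((m : ℝ) + 1) * (x + t) ^ m) / ((x + t) ^ (m + 1)) ^ 2) x :=
      h1.inv (pow_ne_zero _ hxt)
    have h3 := h2.const_mul ((-1 : ℝ) ^ m * (m.factorial : ℝ))
    have h4 : HasDerivAt (fun y : ℝ => (-1) ^ m * (m.factorial : ℝ) / (y + t) ^ (m + 1))
        ((-1 : ℝ) ^ m * (m.factorial : ℝ) *
          (-(((m : ℝ) + 1) * (x + t) ^ m) / ((x + t) ^ (m + 1)) ^ 2)) x := by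
      simpa [div_eq_mul_inv] using h3
    rw [h4.deriv]
    rw [Nat.factorial_succ]
    push_cast
    field_simp
    ring

lemma aux_poly_iteratedDeriv (p : Polynomial ℝ) : ∀ (m : ℕ),
    iteratedDeriv m (fun y : ℝ => p.eval y) = fun y => (derivative^[m] p).eval y := by
  intro m
  induction m with
  | zero => simp
  | succ m ih =>
    rw [iteratedDeriv_succ, ih]
    funext y
    rw [Function.iterate_succ_apply', Polynomial.deriv]

lemma aux_poly_contDiff (p : Polynomial ℝ) (n : ℕ∞) :
    ContDiff ℝ n fun y : ℝ => p.eval y := by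
  induction p using Polynomial.induction_on' with
  | add p q hp hq => simpa using hp.add hq
  | monomial k a => simpa [Polynomial.eval_monomial] using
      (contDiff_const (c := a)).mul (contDiff_id.pow k)

theorem iteratedDeriv_xn_div_x_add_t
    (n : ℕ) (hn : 1 ≤ n) (t : ℝ) (ht : 0 < t) (x : ℝ) (hx : 0 < x) :
    iteratedDeriv n (fun y => y ^ n / (y + t)) x =
      (n.factorial : ℝ) * t ^ n / (x + t) ^ (n + 1) := by
  set s : Set ℝ := {-t}ᶜ with hs_def
  have hs : IsOpen s := isOpen_compl_singleton
  have hxs : x ∈ s := by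
    simp only [hs_def, Set.mem_compl_iff, Set.mem_singleton_iff]
    intro h; linarith
  set p : Polynomial ℝ := ∑ i ∈ Finset.range n, Polynomial.C ((-t) ^ (n - 1 - i)) * X ^ i
    with hp_def
  have hpeval : ∀ y : ℝ, p.eval y = ∑ i ∈ Finset.range n, y ^ i * (-t) ^ (n - 1 - i) := by
    intro y
    simp [hp_def, Polynomial.eval_finset_sum, mul_comm]
  have hne : ∀ y ∈ s, y + t ≠ 0 := by
    intro y hy
    simp only [hs_def, Set.mem_compl_iff, Set.mem_singleton_iff] at hy
    intro h; exact hy (by linarith)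
  -- f = g on s
  have heq : Set.EqOn (fun y : ℝ => y ^ n / (y + t))
      ((fun y : ℝ => p.eval y) + fun y : ℝ => (-t) ^ n * (y + t)⁻¹) s := by
    intro y hy
    have hyt := hne y hy
    have key : (∑ i ∈ Finset.range n, y ^ i * (-t) ^ (n - 1 - i)) * (y - -t)
        = y ^ n - (-t) ^ n := geom_sum₂_mul y (-t) n
    have hyn : y ^ n = p.eval y * (y + t) + (-t) ^ n := by
      rw [hpeval]; linear_combination -key
    simp only [Pi.add_apply]
    rw [hyn]
    field_simp
  have hev : (fun y : ℝ => y ^ n / (y + t)) =ᶠ[𝓝 x]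
      ((fun y : ℝ => p.eval y) + fun y : ℝ => (-t) ^ n * (y + t)⁻¹) := by
    filter_upwards [hs.mem_nhds hxs] with y hy using heq hy
  rw [hev.iteratedDeriv_eq]
  have hwithin : ∀ (f : ℝ → ℝ), iteratedDerivWithin n f s x = iteratedDeriv n f x := by
    intro f
    rw [iteratedDerivWithin_eq_iteratedFDerivWithin, iteratedDeriv_eq_iteratedFDeriv,
      iteratedFDerivWithin_of_isOpen n hs hxs]
  have hud : UniqueDiffOn ℝ s := hs.uniqueDiffOn
  have hcp : ContDiffOn ℝ n (fun y : ℝ => p.eval y) s := (aux_poly_contDiff p n).contDiffOn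
  have hinv : ContDiffOn ℝ n (fun y : ℝ => (y + t)⁻¹) s :=
    ((contDiff_id.add contDiff_const).contDiffOn).inv hne
  have hci : ContDiffOn ℝ n (fun y : ℝ => (-t) ^ n * (y + t)⁻¹) s :=
    contDiffOn_const.mul hinv
  rw [← hwithin, iteratedDerivWithin_add hxs hud (hcp x hxs) (hci x hxs),
    iteratedDerivWithin_const_mul hxs hud _ (hinv x hxs), hwithin, hwithin,
    aux_poly_iteratedDeriv,
    aux_inv_iteratedDeriv t n x (by intro h; linarith)]
  have hdeg : p.natDegree < n := by
    have h1 : p.natDegree ≤ n - 1 := Polynomial.natDegree_sum_le_of_forall_le _ _ fun i hi =>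
      (Polynomial.natDegree_C_mul_X_pow_le _ _).trans
        (Nat.le_sub_one_of_lt (Finset.mem_range.mp hi))
    omega
  rw [Polynomial.iterate_derivative_eq_zero hdeg]
  have hxt : x + t ≠ 0 := by positivity
  have h5 : ((-t : ℝ)) ^ n * (-1 : ℝ) ^ n = t ^ n := by
    rw [← mul_pow]; norm_num
  simp only [Polynomial.eval_zero, zero_add]
  field_simp
  have h6 : (-1 : ℝ) ^ (n * 2) = 1 := by rw [pow_mul']; norm_num
  linear_combination (n.factorial : ℝ) * h5 - t ^ n * ((n.factorial : ℝ) - 1) * h6
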